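/- Let $K$ be a field of characteristic $0$, $g\in K[[x]]$ with $g=x+O(x^2)$, $k\in\mathbb{N}$ with $k\ge 1$, and let $Q_1$ be the unique series with $Q_1=x+O(x^2)$ and $gQ_1'=Q_1$. If $R\in K[[x]]\setminus\{0\}$ satisfies $g(x)R'(x)=kR(x)$, then $\operatorname{ord}(R)=k$ and there exists $\lambda\in K$ with $R=\lambda Q_1^k$. -/

import Mathlib

open PowerSeries

private lemma key8 {K : Type*} [Field K] [CharZero K] (g S : K⟦X⟧) (k : ℕ)
    (hg0 : constantCoeff g = 0) (hg1 : coeff 1 g = 1)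
    (hSk : coeff k S = 0)
    (hSeq : g * PowerSeries.derivative K S = (k : K⟦X⟧) * S) : S = 0 := by
  ext n
  induction n using Nat.strong_induction_on with
  | _ n ih =>
  have h := congrArg (coeff n) hSeq
  rw [coeff_mul, coeff_mul] at h
  have hR : ∑ p ∈ Finset.HasAntidiagonal.antidiagonal n, coeff p.1 (k : K⟦X⟧) * coeff p.2 S
      = (k : K) * coeff n S := by
    rw [Finset.sum_eq_single (0, n)]
    · simp
    · rintro ⟨a, b⟩ hab hne
      rw [Finset.HasAntidiagonal.mem_antidiagonal] at hab
      have ha : a ≠ 0 := by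
        rintro rfl
        exact hne (by simp only [Prod.mk.injEq, true_and]; omega)
      have : coeff a (k : K⟦X⟧) = 0 := by
        rw [← map_natCast C k, coeff_C, if_neg ha]
      simp [this]
    · intro h; exact absurd (Finset.HasAntidiagonal.mem_antidiagonal.mpr (by simp)) h
  rw [hR] at h
  rcases Nat.eq_zero_or_pos n with rfl | hn
  · -- n = 0
    have h0 : ∑ p ∈ Finset.HasAntidiagonal.antidiagonal 0, coeff p.1 g * coeff p.2 (PowerSeries.derivative K S) = 0 := by
      simp [coeff_zero_eq_constantCoeff, hg0]
    rw [h0] at h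
    rcases eq_or_ne k 0 with rfl | hk0
    · simpa using hSk
    · have : (k : K) ≠ 0 := Nat.cast_ne_zero.mpr hk0
      have := (mul_eq_zero.mp h.symm).resolve_left this
      simpa using this
  · rcases eq_or_ne n k with rfl | hnk
    · simpa using hSk
    · have hL : ∑ p ∈ Finset.HasAntidiagonal.antidiagonal n, coeff p.1 g * coeff p.2 (PowerSeries.derivative K S)
        = (n : K) * coeff n S := by
        rw [Finset.sum_eq_single (1, n - 1)]
        · rw [coeff_derivative, hg1, Nat.sub_add_cancel hn]
          rw [Nat.cast_sub hn]
          push_cast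
          ring
        · rintro ⟨a, b⟩ hab hne
          rw [Finset.HasAntidiagonal.mem_antidiagonal] at hab
          rcases Nat.eq_zero_or_pos a with rfl | ha
          · simp [coeff_zero_eq_constantCoeff, hg0]
          · have ha1 : a ≠ 1 := by
              rintro rfl
              exact hne (by simp only [Prod.mk.injEq, true_and]; omega)
            have hb : b + 1 < n := by omega
            rw [coeff_derivative, ih _ hb]
            simp
        · intro h; exact absurd (Finset.HasAntidiagonal.mem_antidiagonal.mpr (by omega)) h
      rw [hL] at h
      have : ((n : K) - k) * coeff n S = 0 := by linear_combination h
      have hne : (n : K) - k ≠ 0 := by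
        intro h0
        exact hnk (Nat.cast_inj.mp (sub_eq_zero.mp h0))
      simpa using (mul_eq_zero.mp this).resolve_left hne

/-- solutions of `g R' = k R` have order `k` and are scalar multiples of `Q₁^k`. -/
theorem stmt8 {K : Type*} [Field K] [CharZero K] (g Q R : K⟦X⟧) (k : ℕ) (hk : 1 ≤ k)
    (hg0 : constantCoeff g = 0) (hg1 : coeff 1 g = 1)
    (hQ0 : constantCoeff Q = 0) (hQ1 : coeff 1 Q = 1)
    (hQeq : g * PowerSeries.derivative K Q = Q)
    (hR : R ≠ 0)
    (hReq : g * PowerSeries.derivative K R = (k : K⟦X⟧) * R) :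
    R.order = (k : ℕ∞) ∧ ∃ l : K, R = C l * Q ^ k := by
  -- Q = X * U
  obtain ⟨U, hU⟩ : (X : K⟦X⟧) ∣ Q := X_dvd_iff.mpr hQ0
  have hU0 : constantCoeff U = 1 := by
    have : coeff 1 Q = constantCoeff U := by
      rw [hU]; simp [coeff_succ_X_mul]
    rw [← this, hQ1]
  have hQk : coeff k (Q ^ k) = 1 := by
    rw [hU, mul_pow]
    have h2 := coeff_X_pow_mul (U ^ k) k 0
    rw [zero_add] at h2
    rw [h2, coeff_zero_eq_constantCoeff, map_pow, hU0, one_pow]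
  have hQklow : ∀ i, i < k → coeff i (Q ^ k) = 0 := by
    have : (X : K⟦X⟧) ^ k ∣ Q ^ k := pow_dvd_pow_of_dvd ⟨U, hU⟩ k
    exact fun i hi => (X_pow_dvd_iff.mp this) i hi
  set l := coeff k R with hl
  set S := R - C l * Q ^ k with hS
  -- derivative of Q ^ k
  have hdQk : PowerSeries.derivative K (Q ^ k) = (k : K⟦X⟧) * Q ^ (k - 1) * PowerSeries.derivative K Q := by
    rw [Derivation.leibniz_pow]
    simp [smul_eq_mul]
    ring
  have hQkeq : g * PowerSeries.derivative K (Q ^ k) = (k : K⟦X⟧) * Q ^ k := by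
    rw [hdQk]
    have : Q ^ (k - 1) * Q = Q ^ k := by
      rw [← pow_succ, Nat.sub_add_cancel hk]
    calc g * ((k : K⟦X⟧) * Q ^ (k - 1) * PowerSeries.derivative K Q)
        = (k : K⟦X⟧) * Q ^ (k - 1) * (g * PowerSeries.derivative K Q) := by ring
      _ = (k : K⟦X⟧) * Q ^ k := by rw [hQeq, mul_assoc, this]
  have hSeq : g * PowerSeries.derivative K S = (k : K⟦X⟧) * S := by
    have hd : PowerSeries.derivative K S
        = PowerSeries.derivative K R - C l * PowerSeries.derivative K (Q ^ k) := by
      rw [hS, map_sub, Derivation.leibniz, derivative_C, smul_zero, add_zero, smul_eq_mul]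
    have h3 : g * (C l * PowerSeries.derivative K (Q ^ k)) = C l * ((k : K⟦X⟧) * Q ^ k) := by
      rw [← hQkeq]; ring
    rw [hd, mul_sub, hReq, h3, hS]
    ring
  have hSk : coeff k S = 0 := by
    rw [hS, map_sub, ← hl, coeff_C_mul, hQk, mul_one, sub_self]
  have hS0 : S = 0 := key8 g S k hg0 hg1 hSk hSeq
  have hReqQ : R = C l * Q ^ k := by
    have := sub_eq_zero.mp hS0
    exact this
  have hlne : l ≠ 0 := by
    intro h0
    apply hR
    rw [hReqQ, h0, map_zero, zero_mul]
  refine ⟨?_, l, hReqQ⟩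
  rw [order_eq_nat]
  constructor
  · rw [hReqQ, coeff_C_mul, hQk, mul_one]; exact hlne
  · intro i hi
    rw [hReqQ, coeff_C_mul, hQklow i hi, mul_zero]
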